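/- Diffuseness is a local property: let X, Y be locally connected spaces, f : X → Y a function, and 𝒱 an open cover of X. If for each V ∈ 𝒱 the restriction of f to V is a diffuse continuous function V → Y, then f is a diffuse continuous function. -/
import Mathlib

open Set Topology

/-- An open subset `U` is Z-dense if it meets every non-empty open connected set
in a non-empty connected set. -/
def IsZDense {X : Type*} [TopologicalSpace X] (U : Set X) : Prop :=
  IsOpen U ∧ ∀ C : Set X, IsOpen C → IsConnected C → IsConnected (U ∩ C)

/-- A subset is negligible if its complement is Z-dense. -/
def IsNegligible {X : Type*} [TopologicalSpace X] (I : Set X) : Prop :=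
  IsZDense Iᶜ

/-- A negligible subset element `(U, I)`: `U` open, `I ⊆ U`, the subspace `U`
locally connected, and `I` negligible in the subspace `U`. -/
def NegligibleElem {Y : Type*} [TopologicalSpace Y] (U I : Set Y) : Prop :=
  IsOpen U ∧ I ⊆ U ∧ LocallyConnectedSpace ↥U ∧
    IsNegligible ((Subtype.val ⁻¹' I : Set ↥U))

/-- A continuous function is diffuse if it pulls back negligible subset elements
to negligible subset elements. -/
def Diffuse {X Y : Type*} [TopologicalSpace X] [TopologicalSpace Y] (f : X → Y) : Prop :=
  Continuous f ∧ ∀ U I : Set Y, NegligibleElem U I → NegligibleElem (f ⁻¹' U) (f ⁻¹' I)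

/-- Connectedness transfers along `Subtype.val`. -/
lemma conn_image_iff {X : Type*} [TopologicalSpace X] {S : Set X} (T : Set ↥S) :
    IsConnected ((Subtype.val : ↥S → X) '' T) ↔ IsConnected T := by
  unfold IsConnected
  rw [IsInducing.subtypeVal.isPreconnected_image, Set.image_nonempty]

/-- Key local fact: if the restriction of `f` to an open set `V` is diffuse and `(U, I)`
is a negligible element, then for any open connected `L ⊆ V ∩ f⁻¹ U`, the set
`L \ f⁻¹ I` is (nonempty and) connected. -/
lemma diffuse_restrict_conn {X Y : Type*} [TopologicalSpace X] [TopologicalSpace Y]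
    {f : X → Y} {V : Set X} (hd : Diffuse (fun x : ↥V => f ↑x))
    {U I : Set Y} (hUI : NegligibleElem U I)
    {L : Set X} (hLo : IsOpen L) (hLc : IsConnected L) (hLV : L ⊆ V) (hLU : L ⊆ f ⁻¹' U) :
    IsConnected (L \ f ⁻¹' I) := by
  obtain ⟨-, hd2⟩ := hd
  obtain ⟨-, -, -, hZo, hZc⟩ := hd2 U I hUI
  set g : ↥V → Y := fun x => f ↑x with hg
  set L₁ : Set ↥V := Subtype.val ⁻¹' L with hL₁
  have hL₁U : L₁ ⊆ g ⁻¹' U := fun x hx => hLU hx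
  set L₂ : Set ↥(g ⁻¹' U) := Subtype.val ⁻¹' L₁ with hL₂
  have hL₂o : IsOpen L₂ :=
    (hLo.preimage continuous_subtype_val).preimage continuous_subtype_val
  have hL₁c : IsConnected L₁ := by
    rw [← conn_image_iff, Subtype.image_preimage_coe,
      Set.inter_eq_self_of_subset_right hLV]
    exact hLc
  have hL₂c : IsConnected L₂ := by
    rw [← conn_image_iff, Subtype.image_preimage_coe,
      Set.inter_eq_self_of_subset_right hL₁U]
    exact hL₁c
  have h := hZc L₂ hL₂o hL₂c
  have h1 := (conn_image_iff _).mpr h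
  have e1 : (Subtype.val : ↥(g ⁻¹' U) → ↥V) '' ((Subtype.val ⁻¹' (g ⁻¹' I))ᶜ ∩ L₂) =
      (g ⁻¹' I)ᶜ ∩ L₁ := by
    rw [← Set.preimage_compl, hL₂, ← Set.preimage_inter, Subtype.image_preimage_coe,
      Set.inter_eq_self_of_subset_right (fun x hx => hL₁U hx.2)]
  rw [e1] at h1
  have h2 := (conn_image_iff _).mpr h1
  have e2 : (Subtype.val : ↥V → X) '' ((g ⁻¹' I)ᶜ ∩ L₁) = L \ f ⁻¹' I := by
    have e3 : (g ⁻¹' I)ᶜ ∩ L₁ = Subtype.val ⁻¹' ((f ⁻¹' I)ᶜ ∩ L) := rfl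
    rw [e3, Subtype.image_preimage_coe]
    ext x
    constructor
    · rintro ⟨-, hI, hL⟩; exact ⟨hL, hI⟩
    · rintro ⟨hL, hI⟩; exact ⟨hLV hL, hI, hL⟩
  rwa [e2] at h2

theorem diffuse_of_cover {X Y : Type*} [TopologicalSpace X] [LocallyConnectedSpace X]
    [TopologicalSpace Y] [LocallyConnectedSpace Y] (f : X → Y)
    {𝒱 : Set (Set X)} (hV : ∀ V ∈ 𝒱, IsOpen V) (hcov : ⋃₀ 𝒱 = Set.univ)
    (hloc : ∀ V ∈ 𝒱, Diffuse (fun x : ↥V => f ↑x)) :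
    Diffuse f := by
  have hsel : ∀ x : X, ∃ V, V ∈ 𝒱 ∧ x ∈ V := by
    intro x
    have : x ∈ ⋃₀ 𝒱 := by rw [hcov]; trivial
    simpa [Set.mem_sUnion] using this
  choose Vs hVsmem hVsx using hsel
  -- continuity of f
  have hfc : Continuous f := by
    rw [continuous_iff_continuousAt]
    intro x
    have hcV : ContinuousOn f (Vs x) :=
      continuousOn_iff_continuous_restrict.mpr (hloc _ (hVsmem x)).1
    exact hcV.continuousAt ((hV _ (hVsmem x)).mem_nhds (hVsx x))
  refine ⟨hfc, fun U I hUI => ?_⟩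
  set W : Set X := f ⁻¹' U with hWdef
  set J : Set X := f ⁻¹' I with hJdef
  have hWo : IsOpen W := hUI.1.preimage hfc
  -- U \ I is open in Y
  have hUIo : IsOpen (U \ I) := by
    have h1 : IsOpen ((Subtype.val ⁻¹' I : Set ↥U)ᶜ) := hUI.2.2.2.1
    have : IsOpen ((Subtype.val : ↥U → Y) '' (Subtype.val ⁻¹' I)ᶜ) :=
      hUI.1.isOpenMap_subtype_val _ h1
    rwa [← Set.preimage_compl, Subtype.image_preimage_coe, ← Set.diff_eq] at this
  have hWJo : IsOpen (W \ J) := by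
    rw [hWdef, hJdef, ← Set.preimage_diff]
    exact hUIo.preimage hfc
  -- key local fact in ambient terms
  have keyA : ∀ x : X, ∀ L : Set X, IsOpen L → IsConnected L → L ⊆ Vs x → L ⊆ W →
      IsConnected (L \ J) := fun x L hLo hLc hLV hLW =>
    diffuse_restrict_conn (hloc _ (hVsmem x)) hUI hLo hLc hLV hLW
  -- main connectivity lemma
  have keyB : ∀ C : Set X, IsOpen C → IsConnected C → C ⊆ W → IsConnected (C \ J) := by
    intro C hCo hCc hCW
    set K : X → Set X := fun x => connectedComponentIn (C ∩ Vs x) x with hK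
    have hKo : ∀ x, IsOpen (K x) := fun x =>
      (hCo.inter (hV _ (hVsmem x))).connectedComponentIn
    have hxK : ∀ x ∈ C, x ∈ K x := fun x hx =>
      mem_connectedComponentIn ⟨hx, hVsx x⟩
    have hKsub : ∀ x, K x ⊆ C ∩ Vs x := fun x => connectedComponentIn_subset _ _
    have hKc : ∀ x ∈ C, IsConnected (K x) := fun x hx =>
      isConnected_connectedComponentIn_iff.mpr ⟨hx, hVsx x⟩
    have hKD : ∀ x ∈ C, IsConnected (K x \ J) := fun x hx =>
      keyA x (K x) (hKo x) (hKc x hx) (fun y hy => (hKsub x hy).2)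
        (fun y hy => hCW (hKsub x hy).1)
    have hKDsub : ∀ x, K x \ J ⊆ C \ J := fun x y hy => ⟨(hKsub x hy.1).1, hy.2⟩
    constructor
    · obtain ⟨x, hx⟩ := hCc.nonempty
      exact ((hKD x hx).nonempty).mono (hKDsub x)
    intro u v hu hv hsub hneu hnev
    by_contra hne
    rw [Set.not_nonempty_iff_eq_empty] at hne
    -- dichotomy for the pieces
    have dich : ∀ x ∈ C, K x \ J ⊆ u ∨ K x \ J ⊆ v := by
      intro x hx
      have hsx : K x \ J ⊆ u ∪ v := (hKDsub x).trans hsub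
      rcases Set.eq_empty_or_nonempty ((K x \ J) ∩ u) with h0 | h0
      · exact Or.inr fun y hy => ((hsx hy).resolve_left
          (fun hyu => Set.eq_empty_iff_forall_notMem.mp h0 y ⟨hy, hyu⟩))
      rcases Set.eq_empty_or_nonempty ((K x \ J) ∩ v) with h1 | h1
      · exact Or.inl fun y hy => ((hsx hy).resolve_right
          (fun hyv => Set.eq_empty_iff_forall_notMem.mp h1 y ⟨hy, hyv⟩))
      exfalso
      obtain ⟨z, hz⟩ := (hKD x hx).isPreconnected u v hu hv hsx h0 h1
      exact Set.eq_empty_iff_forall_notMem.mp hne z ⟨hKDsub x hz.1, hz.2⟩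
    -- propagation step
    have step : ∀ u' v' : Set X, (∀ x ∈ C, K x \ J ⊆ u' ∨ K x \ J ⊆ v') →
        ((C \ J) ∩ (u' ∩ v') = ∅) →
        ∀ x ∈ C, ∀ y ∈ K x, K x \ J ⊆ u' → K y \ J ⊆ u' := by
      intro u' v' dich' hdisj x hx y hyKx hxu
      have hyC : y ∈ C := (hKsub x hyKx).1
      set L : Set X := connectedComponentIn (K x ∩ K y) y with hL
      have hyL : y ∈ K x ∩ K y := ⟨hyKx, hxK y hyC⟩
      have hLo : IsOpen L := ((hKo x).inter (hKo y)).connectedComponentIn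
      have hLc : IsConnected L := isConnected_connectedComponentIn_iff.mpr hyL
      have hLsub : L ⊆ K x ∩ K y := connectedComponentIn_subset _ _
      have hLD : IsConnected (L \ J) :=
        keyA x L hLo hLc (fun z hz => (hKsub x (hLsub hz).1).2)
          (fun z hz => hCW (hKsub x (hLsub hz).1).1)
      obtain ⟨z, hzL, hzJ⟩ := hLD.nonempty
      have hzKy : z ∈ K y \ J := ⟨(hLsub hzL).2, hzJ⟩
      rcases dich' y hyC with h | h
      · exact h
      · exfalso
        have hzu : z ∈ u' := hxu ⟨(hLsub hzL).1, hzJ⟩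
        have hzv : z ∈ v' := h hzKy
        exact Set.eq_empty_iff_forall_notMem.mp hdisj z
          ⟨⟨(hKsub y hzKy.1).1, hzJ⟩, hzu, hzv⟩
    have hdisj' : (C \ J) ∩ (v ∩ u) = ∅ := by rw [Set.inter_comm v u]; exact hne
    have dich' : ∀ x ∈ C, K x \ J ⊆ v ∨ K x \ J ⊆ u := fun x hx => (dich x hx).symm
    -- the open sets
    set P : Set X := {x | x ∈ C ∧ K x \ J ⊆ u} with hP
    set Q : Set X := {x | x ∈ C ∧ K x \ J ⊆ v} with hQ
    set U' : Set X := ⋃ x ∈ P, K x with hU'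
    set V' : Set X := ⋃ x ∈ Q, K x with hV'
    have hU'o : IsOpen U' := isOpen_biUnion fun x _ => hKo x
    have hV'o : IsOpen V' := isOpen_biUnion fun x _ => hKo x
    have hCsub : C ⊆ U' ∪ V' := by
      intro x hx
      rcases dich x hx with h | h
      · exact Or.inl (Set.mem_biUnion ⟨hx, h⟩ (hxK x hx))
      · exact Or.inr (Set.mem_biUnion ⟨hx, h⟩ (hxK x hx))
    have hmemP : ∀ a, a ∈ (C \ J) ∩ u → a ∈ P := by
      intro a ⟨haD, hau⟩
      refine ⟨haD.1, ?_⟩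
      rcases dich a haD.1 with h | h
      · exact h
      · exfalso
        exact Set.eq_empty_iff_forall_notMem.mp hne a
          ⟨haD, hau, h ⟨hxK a haD.1, haD.2⟩⟩
    have hmemQ : ∀ a, a ∈ (C \ J) ∩ v → a ∈ Q := by
      intro a ⟨haD, hav⟩
      refine ⟨haD.1, ?_⟩
      rcases dich a haD.1 with h | h
      · exfalso
        exact Set.eq_empty_iff_forall_notMem.mp hne a
          ⟨haD, h ⟨hxK a haD.1, haD.2⟩, hav⟩
      · exact h
    have hneu' : (C ∩ U').Nonempty := by
      obtain ⟨a, ha⟩ := hneu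
      have haP := hmemP a ha
      exact ⟨a, ha.1.1, Set.mem_biUnion haP (hxK a ha.1.1)⟩
    have hnev' : (C ∩ V').Nonempty := by
      obtain ⟨a, ha⟩ := hnev
      have haQ := hmemQ a ha
      exact ⟨a, ha.1.1, Set.mem_biUnion haQ (hxK a ha.1.1)⟩
    obtain ⟨z, hzC, hzUV⟩ := hCc.isPreconnected U' V' hU'o hV'o hCsub hneu' hnev'
    obtain ⟨x, hxP, hzKx⟩ := by
      simpa [hU', Set.mem_iUnion] using hzUV.1
    obtain ⟨y, hyQ, hzKy⟩ := by
      simpa [hV', Set.mem_iUnion] using hzUV.2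
    have hzu : K z \ J ⊆ u := step u v dich hne x hxP.1 z hzKx hxP.2
    have hzv : K z \ J ⊆ v := step v u dich' hdisj' y hyQ.1 z hzKy hyQ.2
    obtain ⟨w, hw⟩ := (hKD z hzC).nonempty
    exact Set.eq_empty_iff_forall_notMem.mp hne w ⟨hKDsub z hw, hzu hw, hzv hw⟩
  -- assemble
  refine ⟨hWo, fun x hx => hUI.2.1 hx, hWo.isOpenEmbedding_subtypeVal.locallyConnectedSpace, ?_, ?_⟩
  · -- openness of the complement in the subspace
    have e : ((Subtype.val ⁻¹' J : Set ↥W))ᶜ = (Subtype.val : ↥W → X) ⁻¹' (W \ J) := by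
      ext x
      simp only [Set.mem_compl_iff, Set.mem_preimage, Set.mem_diff]
      exact ⟨fun h => ⟨x.2, h⟩, fun h => h.2⟩
    rw [e]
    exact hWJo.preimage continuous_subtype_val
  · -- connectivity in the subspace
    intro C' hC'o hC'c
    have hCc : IsConnected ((Subtype.val : ↥W → X) '' C') := (conn_image_iff _).mpr hC'c
    have hCo : IsOpen ((Subtype.val : ↥W → X) '' C') := hWo.isOpenMap_subtype_val _ hC'o
    have hCW : (Subtype.val : ↥W → X) '' C' ⊆ W := Subtype.coe_image_subset _ _
    have hB := keyB _ hCo hCc hCW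
    rw [← conn_image_iff]
    have e : (Subtype.val : ↥W → X) '' ((Subtype.val ⁻¹' J)ᶜ ∩ C') =
        ((Subtype.val : ↥W → X) '' C') \ J := by
      rw [← Set.preimage_compl,
        Set.image_inter Subtype.val_injective, Subtype.image_preimage_coe]
      ext x
      constructor
      · rintro ⟨⟨-, hJ⟩, hC⟩; exact ⟨hC, hJ⟩
      · rintro ⟨hC, hJ⟩
        exact ⟨⟨hCW hC, hJ⟩, hC⟩
    rwa [e]
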